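/- Let (V,E) be a finite simple graph. For any S ⊆ V, let R_S := { (X,Y) ∈ 2^S × 2^S | X ∪ Y = S, X is a clique, and Y is a coclique }. Then |R_S| ≤ 2|S| + 1. -/

import Mathlib

open Set

/-- The set of clique–coclique covers of `S`. -/
def CCP {V : Type} (G : SimpleGraph V) (S : Set V) : Set (Set V × Set V) :=
  {p : Set V × Set V | p.1 ⊆ S ∧ p.2 ⊆ S ∧ p.1 ∪ p.2 = S ∧
        G.IsClique p.1 ∧ p.2.Pairwise fun u v => ¬ G.Adj u v}

/-- Uniqueness: at most one pair `(A,B)` covering `S \ {v}` has `v` complete to `A`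
and anticomplete to `B`. -/
lemma CCP_uniq {V : Type} {G : SimpleGraph V} {S : Set V} {v : V}
    {A B A' B' : Set V}
    (h : (A, B) ∈ CCP G (S \ {v})) (h' : (A', B') ∈ CCP G (S \ {v}))
    (hA : ∀ u ∈ A, G.Adj v u) (hB : ∀ u ∈ B, ¬ G.Adj v u)
    (hA' : ∀ u ∈ A', G.Adj v u) (hB' : ∀ u ∈ B', ¬ G.Adj v u) :
    A = A' ∧ B = B' := by
  obtain ⟨hA1, hB1, hU1, -, -⟩ := h
  obtain ⟨hA1', hB1', hU1', -, -⟩ := h'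
  have key : ∀ (A B A' B' : Set V), A ∪ B = S \ {v} → A' ∪ B' = S \ {v} →
      (∀ u ∈ A, G.Adj v u) → (∀ u ∈ B', ¬ G.Adj v u) → A ⊆ A' := by
    intro A B A' B' hU hU' hA hB' u hu
    by_contra hu'
    have huS : u ∈ S \ {v} := hU ▸ Or.inl hu
    have : u ∈ A' ∪ B' := hU' ▸ huS
    rcases this with h1 | h1
    · exact hu' h1
    · exact hB' u h1 (hA u hu)
  have e1 : A = A' :=
    subset_antisymm (key A B A' B' hU1 hU1' hA hB') (key A' B' A B hU1' hU1 hA' hB)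
  have e2 : B = B' := by
    apply subset_antisymm
    · intro u hu
      by_contra hu'
      have huS : u ∈ S \ {v} := hB1 hu
      have : u ∈ A' ∪ B' := hU1' ▸ huS
      rcases this with h1 | h1
      · exact hB u hu (hA' u h1)
      · exact hu' h1
    · intro u hu
      by_contra hu'
      have huS : u ∈ S \ {v} := hB1' hu
      have : u ∈ A ∪ B := hU1 ▸ huS
      rcases this with h1 | h1
      · exact hB' u hu (hA u h1)
      · exact hu' h1
  exact ⟨e1, e2⟩

lemma CCP_mapsTo {V : Type} {G : SimpleGraph V} {S : Set V} {v : V}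
    {p : Set V × Set V} (hp : p ∈ CCP G S) :
    (p.1 \ {v}, p.2 \ {v}) ∈ CCP G (S \ {v}) := by
  obtain ⟨h1, h2, h3, h4, h5⟩ := hp
  refine ⟨diff_subset_diff_left h1, diff_subset_diff_left h2, ?_, h4.subset diff_subset,
    h5.mono diff_subset⟩
  rw [← union_diff_distrib, h3]

/-- If `v ∈ p.1` then `v` is complete to `p.1 \ {v}`. -/
lemma CCP_complete {V : Type} {G : SimpleGraph V} {S : Set V} {v : V}
    {p : Set V × Set V} (hp : p ∈ CCP G S) (hv : v ∈ p.1) :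
    ∀ u ∈ p.1 \ {v}, G.Adj v u := fun u hu =>
  hp.2.2.2.1 hv hu.1 (fun h => hu.2 h.symm)

lemma CCP_anticomplete {V : Type} {G : SimpleGraph V} {S : Set V} {v : V}
    {p : Set V × Set V} (hp : p ∈ CCP G S) (hv : v ∈ p.2) :
    ∀ u ∈ p.2 \ {v}, ¬ G.Adj v u := fun u hu =>
  hp.2.2.2.2 hv hu.1 (fun h => hu.2 h.symm)


lemma eq_of_sdiff_eq {V : Type} {v : V} {s t : Set V} (hs : v ∈ s) (ht : v ∈ t)
    (h : s \ {v} = t \ {v}) : s = t := by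
  ext u
  by_cases hu : u = v
  · subst hu; simp [hs, ht]
  · constructor <;> intro hm
    · have h1 : u ∈ s \ {v} := ⟨hm, hu⟩
      rw [h] at h1; exact h1.1
    · have h1 : u ∈ t \ {v} := ⟨hm, hu⟩
      rw [← h] at h1; exact h1.1

/-- The key step: removing a vertex decreases the count by at most 2. -/
lemma CCP_step {V : Type} [Fintype V] (G : SimpleGraph V) (S : Set V) {v : V}
    (hv : v ∈ S) :
    (CCP G S).ncard ≤ (CCP G (S \ {v})).ncard + 2 := by
  classical
  set φ : Set V × Set V → Set V × Set V := fun p => (p.1 \ {v}, p.2 \ {v}) with hφ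
  set T1 : Set (Set V × Set V) := {p | p ∈ CCP G S ∧ v ∈ p.1 ∧ v ∈ p.2} with hT1
  set T2 : Set (Set V × Set V) :=
    {p | p ∈ CCP G S ∧ v ∈ p.1 ∧ v ∉ p.2 ∧ (p.1 \ {v}, p.2 ∪ {v}) ∈ CCP G S} with hT2
  -- every element of CCP G S contains v in one of the two components
  have hvmem : ∀ p ∈ CCP G S, v ∈ p.1 ∪ p.2 := fun p hp => hp.2.2.1 ▸ hv
  -- T1 is a subsingleton
  have hsub1 : T1.Subsingleton := by
    rintro p ⟨hp, hp1, hp2⟩ q ⟨hq, hq1, hq2⟩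
    have h := CCP_uniq (CCP_mapsTo hp) (CCP_mapsTo hq)
      (CCP_complete hp hp1) (CCP_anticomplete hp hp2)
      (CCP_complete hq hq1) (CCP_anticomplete hq hq2)
    exact Prod.ext (eq_of_sdiff_eq hp1 hq1 h.1) (eq_of_sdiff_eq hp2 hq2 h.2)
  -- for elements of T2, v is anticomplete to p.2 \ {v}
  have hT2anti : ∀ p ∈ T2, ∀ u ∈ p.2 \ {v}, ¬ G.Adj v u := by
    rintro p ⟨hp, hp1, hp2, hsib⟩ u hu
    have hv' : v ∈ (p.1 \ {v}, p.2 ∪ {v}).2 := Or.inr rfl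
    exact CCP_anticomplete hsib hv' u ⟨Or.inl hu.1, hu.2⟩
  have hsub2 : T2.Subsingleton := by
    rintro p hp q hq
    obtain ⟨hpc, hp1, hp2, hpsib⟩ := hp
    obtain ⟨hqc, hq1, hq2, hqsib⟩ := hq
    have h := CCP_uniq (CCP_mapsTo hpc) (CCP_mapsTo hqc)
      (CCP_complete hpc hp1) (hT2anti p ⟨hpc, hp1, hp2, hpsib⟩)
      (CCP_complete hqc hq1) (hT2anti q ⟨hqc, hq1, hq2, hqsib⟩)
    have e1 : p.1 = q.1 := eq_of_sdiff_eq hp1 hq1 h.1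
    have e2 : p.2 = q.2 := by
      have : p.2 \ {v} = p.2 := diff_singleton_eq_self hp2
      have hq' : q.2 \ {v} = q.2 := diff_singleton_eq_self hq2
      rw [← this, ← hq', h.2]
    exact Prod.ext e1 e2
  -- injectivity off T1 ∪ T2
  have hinj : InjOn φ (CCP G S \ (T1 ∪ T2)) := by
    rintro p ⟨hp, hpT⟩ q ⟨hq, hqT⟩ heq
    have heq1 : p.1 \ {v} = q.1 \ {v} := congrArg Prod.fst heq
    have heq2 : p.2 \ {v} = q.2 \ {v} := congrArg Prod.snd heq
    -- patterns
    have hpat : ∀ r : Set V × Set V, r ∈ CCP G S → r ∉ T1 ∪ T2 → v ∈ r.1 → v ∉ r.2 →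
        ((r.1 \ {v}, r.2 ∪ {v}) ∉ CCP G S) := by
      intro r hr hrT hr1 hr2 hsib
      exact hrT (Or.inr ⟨hr, hr1, hr2, hsib⟩)
    have hpv := hvmem p hp
    have hqv := hvmem q hq
    have hnotboth_p : ¬ (v ∈ p.1 ∧ v ∈ p.2) := fun h => hpT (Or.inl ⟨hp, h.1, h.2⟩)
    have hnotboth_q : ¬ (v ∈ q.1 ∧ v ∈ q.2) := fun h => hqT (Or.inl ⟨hq, h.1, h.2⟩)
    -- helper: the crossed case is impossible
    have cross : ∀ r s : Set V × Set V, r ∈ CCP G S → s ∈ CCP G S → r ∉ T1 ∪ T2 →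
        r.1 \ {v} = s.1 \ {v} → r.2 \ {v} = s.2 \ {v} →
        v ∈ r.1 → v ∉ r.2 → v ∉ s.1 → v ∈ s.2 → False := by
      intro r s hr hs hrT e1 e2 hr1 hr2 hs1 hs2
      apply hpat r hr hrT hr1 hr2
      have : (r.1 \ {v}, r.2 ∪ {v}) = s := by
        apply Prod.ext
        · show r.1 \ {v} = s.1
          rw [e1, diff_singleton_eq_self hs1]
        · show r.2 ∪ {v} = s.2
          rw [union_singleton, ← diff_singleton_eq_self hr2, e2,
            insert_diff_singleton, insert_eq_self.2 hs2]
      rw [this]; exact hs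
    by_cases hp1 : v ∈ p.1 <;> by_cases hq1 : v ∈ q.1
    · -- v in both firsts; then v ∉ p.2 and v ∉ q.2
      have hp2 : v ∉ p.2 := fun h => hnotboth_p ⟨hp1, h⟩
      have hq2 : v ∉ q.2 := fun h => hnotboth_q ⟨hq1, h⟩
      exact Prod.ext (eq_of_sdiff_eq hp1 hq1 heq1)
        (by rw [← diff_singleton_eq_self hp2, ← diff_singleton_eq_self hq2, heq2])
    · have hq2 : v ∈ q.2 := hqv.resolve_left hq1
      have hp2 : v ∉ p.2 := fun h => hnotboth_p ⟨hp1, h⟩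
      exact absurd (cross p q hp hq hpT heq1 heq2 hp1 hp2 hq1 hq2) not_false
    · have hp2 : v ∈ p.2 := hpv.resolve_left hp1
      have hq2 : v ∉ q.2 := fun h => hnotboth_q ⟨hq1, h⟩
      exact absurd (cross q p hq hp hqT heq1.symm heq2.symm hq1 hq2 hp1 hp2) not_false
    · have hp2 : v ∈ p.2 := hpv.resolve_left hp1
      have hq2 : v ∈ q.2 := hqv.resolve_left hq1
      exact Prod.ext
        (by rw [← diff_singleton_eq_self hp1, ← diff_singleton_eq_self hq1, heq1])
        (eq_of_sdiff_eq hp2 hq2 heq2)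
  -- assemble counts
  have hmaps : ∀ p ∈ CCP G S \ (T1 ∪ T2), φ p ∈ CCP G (S \ {v}) :=
    fun p hp => CCP_mapsTo hp.1
  have hbig : (CCP G S \ (T1 ∪ T2)).ncard ≤ (CCP G (S \ {v})).ncard :=
    Set.ncard_le_ncard_of_injOn φ hmaps hinj (Set.toFinite _)
  have hTcard : (T1 ∪ T2).ncard ≤ 2 := by
    calc (T1 ∪ T2).ncard ≤ T1.ncard + T2.ncard := Set.ncard_union_le _ _
    _ ≤ 1 + 1 := by
        gcongr
        · exact (Set.ncard_le_one (Set.toFinite _)).2 fun a ha b hb => hsub1 ha hb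
        · exact (Set.ncard_le_one (Set.toFinite _)).2 fun a ha b hb => hsub2 ha hb
  have hcover : CCP G S ⊆ (CCP G S \ (T1 ∪ T2)) ∪ (T1 ∪ T2) := by
    intro p hp
    by_cases h : p ∈ T1 ∪ T2
    · exact Or.inr h
    · exact Or.inl ⟨hp, h⟩
  calc (CCP G S).ncard ≤ ((CCP G S \ (T1 ∪ T2)) ∪ (T1 ∪ T2)).ncard :=
        Set.ncard_le_ncard hcover (Set.toFinite _)
    _ ≤ (CCP G S \ (T1 ∪ T2)).ncard + (T1 ∪ T2).ncard := Set.ncard_union_le _ _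
    _ ≤ (CCP G (S \ {v})).ncard + 2 := by omega

lemma CCP_card {V : Type} [Fintype V] (G : SimpleGraph V) :
    ∀ (n : ℕ) (S : Set V), S.ncard = n → (CCP G S).ncard ≤ 2 * n + 1 := by
  intro n
  induction n with
  | zero =>
    intro S hS
    have hSe : S = ∅ := (Set.ncard_eq_zero (Set.toFinite _)).1 hS
    subst hSe
    have : CCP G (∅ : Set V) = {((∅ : Set V), (∅ : Set V))} := by
      ext p
      constructor
      · rintro ⟨h1, h2, -, -, -⟩
        have e1 : p.1 = ∅ := subset_empty_iff.1 h1
        have e2 : p.2 = ∅ := subset_empty_iff.1 h2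
        simp [Prod.ext_iff, e1, e2]
      · rintro rfl
        exact ⟨subset_rfl, subset_rfl, by simp, by simp [SimpleGraph.IsClique], by simp⟩
    rw [this, Set.ncard_singleton]
  | succ n ih =>
    intro S hS
    have hne : S.Nonempty := by
      rw [← Set.ncard_pos (Set.toFinite _)] at *; omega
    obtain ⟨v, hv⟩ := hne
    have hS' : (S \ {v}).ncard = n := by
      rw [Set.ncard_diff_singleton_of_mem hv, hS]; omega
    calc (CCP G S).ncard ≤ (CCP G (S \ {v})).ncard + 2 := CCP_step G S hv
      _ ≤ 2 * n + 1 + 2 := by have := ih (S \ {v}) hS'; omega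
      _ = 2 * (n + 1) + 1 := by ring

/-- For any subset `S` of the vertices of a finite graph, the number of pairs
`(X,Y)` of subsets of `S` with `X ∪ Y = S`, `X` a clique and `Y` a coclique is
at most `2|S| + 1`. -/
theorem card_clique_coclique_covers_le {V : Type} [Fintype V]
    (G : SimpleGraph V) (S : Set V) :
    {p : Set V × Set V | p.1 ⊆ S ∧ p.2 ⊆ S ∧ p.1 ∪ p.2 = S ∧
        G.IsClique p.1 ∧ p.2.Pairwise fun u v => ¬ G.Adj u v}.ncard
      ≤ 2 * S.ncard + 1 := by
  exact CCP_card G S.ncard S rfl
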